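/- arXiv:1911.04079 — 3 statements merged into one kernel-verified Lean document; each statement's English description precedes it below -/
import Mathlib

section
/- Let N = {1,…,2n} carry a coloring with exactly n black and n white nodes, and let T be the set of nodes that are either odd and white or even and black. Let π be an odd-even pairing and ρ a black-white pairing of N, and let S₁, S₂ ⊆ N be balanced subsets with ρ(S_i) = S_i and π(S_i △ T) = S_i △ T for i = 1, 2. For i = 1, 2, let ρ_i be a black-white pairing with ρ_i(S_i) = S_i whose restrictions to S_i and to N \ S_i have no crossings. Then the numbers of crossings of ρ₁ and ρ₂ have the same parity. -/
namespace DD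

/-- The node set `{1, …, 2n}`. -/
def nodes (n : ℕ) : Finset ℕ := Finset.Icc 1 (2 * n)

/-- `ρ` is a pairing of `{1,…,2n}`: a fixed-point-free involution of the node set. -/
structure IsPairing (n : ℕ) (ρ : ℕ → ℕ) : Prop where
  maps : ∀ i ∈ nodes n, ρ i ∈ nodes n
  invol : ∀ i ∈ nodes n, ρ (ρ i) = i
  nofix : ∀ i ∈ nodes n, ρ i ≠ i

/-- Number of crossings of `ρ` among pairs of `ρ` contained in `A`:
a crossing is a pair of pairs `(a,c)`, `(b,d)` of `ρ` with `a < b < c < d`. -/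
def numCrossingsOn (A : Finset ℕ) (ρ : ℕ → ℕ) : ℕ :=
  ((A ×ˢ A).filter (fun p => p.1 < p.2 ∧ p.2 < ρ p.1 ∧ ρ p.1 < ρ p.2)).card

/-- Number of crossings of a pairing of `{1,…,2n}`. -/
def numCrossings (n : ℕ) (ρ : ℕ → ℕ) : ℕ := numCrossingsOn (nodes n) ρ

/-- A pairing is planar if it has no crossings. -/
def IsPlanar (n : ℕ) (ρ : ℕ → ℕ) : Prop := numCrossings n ρ = 0

/-- A coloring `c : ℕ → Bool` of the nodes: `true` = black, `false` = white.
A black-white pairing pairs each black node with a white node. -/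
def IsBW (n : ℕ) (c : ℕ → Bool) (ρ : ℕ → ℕ) : Prop :=
  ∀ i ∈ nodes n, c (ρ i) = !(c i)

/-- An odd-even pairing pairs each odd node with an even node. -/
def IsOE (n : ℕ) (ρ : ℕ → ℕ) : Prop :=
  ∀ i ∈ nodes n, ρ i % 2 ≠ i % 2

/-- The coloring has exactly `n` black (hence exactly `n` white) nodes. -/
def BalancedColoring (n : ℕ) (c : ℕ → Bool) : Prop :=
  ((nodes n).filter (fun i => c i = true)).card = n

/-- The black nodes. -/
def blacks (n : ℕ) (c : ℕ → Bool) : Finset ℕ := (nodes n).filter (fun i => c i = true)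

/-- The white nodes. -/
def whites (n : ℕ) (c : ℕ → Bool) : Finset ℕ := (nodes n).filter (fun i => c i = false)

/-- `sign_BW(ρ)`: the sign of the permutation sending `i` to the rank of `w_i = ρ(b_i)`
among the white nodes, computed as `(-1)` to the number of inversions, i.e. the number of
pairs of black nodes `b < b'` with `ρ b > ρ b'`. -/
def signBW (n : ℕ) (c : ℕ → Bool) (ρ : ℕ → ℕ) : ℤ :=
  (-1 : ℤ) ^ (((nodes n ×ˢ nodes n).filter
    (fun p => c p.1 = true ∧ c p.2 = true ∧ p.1 < p.2 ∧ ρ p.2 < ρ p.1)).card)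

/-- `sign_OE(π)`: the sign of the permutation sending `i` to `π(2i−1)/2`, computed as
`(-1)` to the number of pairs of odd nodes `a < b` with `π a > π b`. -/
def signOE (n : ℕ) (π : ℕ → ℕ) : ℤ :=
  (-1 : ℤ) ^ (((nodes n ×ˢ nodes n).filter
    (fun p => p.1 % 2 = 1 ∧ p.2 % 2 = 1 ∧ p.1 < p.2 ∧ π p.2 < π p.1)).card)

/-- `a_{b,w}`: the number of indices `i` with `min b w ≤ i < max b w` such that nodes `i`
and `i+1` have the same color. -/
def aCount (c : ℕ → Bool) (b w : ℕ) : ℕ :=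
  ((Finset.Ico (min b w) (max b w)).filter (fun i => c i = c (i + 1))).card

/-- `sign(b,w) = (−1)^{(|b−w| + a_{b,w} − 1)/2}` for a black node `b` and white node `w`. -/
def pairSign (c : ℕ → Bool) (b w : ℕ) : ℤ :=
  (-1 : ℤ) ^ ((max b w - min b w + aCount c b w - 1) / 2)

/-- Cyclic successor of node `m` in `{1,…,2n}`. -/
def nextNode (n m : ℕ) : ℕ := if m = 2 * n then 1 else m + 1

/-- Couples of consecutive nodes of the same color, cyclically: indices `m ∈ {1,…,2n}`
with nodes `m` and `m+1` (cyclically) of the same color. -/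
def couples (n : ℕ) (c : ℕ → Bool) : Finset ℕ :=
  (nodes n).filter (fun m => c m = c (nextNode n m))

/-- The value `φ(m)` for a couple `m`: writing `r` for the rank of `m` among couples of its
own color, `φ(m) = 2r` if `m` has the same color as node `1`, and `φ(m) = 2r − 1` otherwise. -/
def phiCouple (n : ℕ) (c : ℕ → Bool) (m : ℕ) : ℕ :=
  if c m = c 1 then 2 * ((couples n c).filter (fun m' => c m' = c m ∧ m' ≤ m)).card
  else 2 * ((couples n c).filter (fun m' => c m' = c m ∧ m' ≤ m)).card - 1

/-- `sign_cons(N)`: the sign of the one-line permutation `(φ(n₁),…,φ(n_{2k}))`, computed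
as `(-1)` to its number of inversions. -/
def signCons (n : ℕ) (c : ℕ → Bool) : ℤ :=
  (-1 : ℤ) ^ (((couples n c ×ˢ couples n c).filter
    (fun p => p.1 < p.2 ∧ phiCouple n c p.2 < phiCouple n c p.1)).card)

/-- The set `T` of nodes that are odd and white, or even and black. -/
def Tset (n : ℕ) (c : ℕ → Bool) : Finset ℕ :=
  (nodes n).filter (fun i => (i % 2 = 1 ∧ c i = false) ∨ (i % 2 = 0 ∧ c i = true))

/-- A subset is balanced if it contains equally many black and white nodes. -/
def BalancedSubset (c : ℕ → Bool) (S : Finset ℕ) : Prop :=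
  (S.filter (fun i => c i = true)).card = (S.filter (fun i => c i = false)).card

/-- `ρ` does not connect `S` to its complement: `ρ(S) = S`. -/
def Invariant (S : Finset ℕ) (ρ : ℕ → ℕ) : Prop := ∀ i ∈ S, ρ i ∈ S

/-- Reachability under the subgroup generated by the involutions `π` and `ρ`. -/
def compRel (n : ℕ) (π ρ : ℕ → ℕ) (a b : ℕ) : Prop :=
  Relation.ReflTransGen (fun u v => u ∈ nodes n ∧ (v = π u ∨ v = ρ u)) a b

open scoped Classical in
/-- The number of components (orbits) of `π ∪ ρ` on the node set. -/
noncomputable def numComponents (n : ℕ) (π ρ : ℕ → ℕ) : ℕ :=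
  ((nodes n).image (fun a => (nodes n).filter (fun b => compRel n π ρ a b))).card



lemma even_invol {α : Type*} [DecidableEq α] (s : Finset α) (f : α → α)
    (hm : ∀ a ∈ s, f a ∈ s) (hi : ∀ a ∈ s, f (f a) = a) (hne : ∀ a ∈ s, f a ≠ a) :
    Even s.card := by
  induction s using Finset.strongInduction with
  | _ s ih =>
    rcases s.eq_empty_or_nonempty with h | ⟨a, ha⟩
    · simp [h]
    · have hfa : f a ∈ s := hm a ha
      have hfa' : f a ≠ a := hne a ha
      have hmem : ∀ x, x ∈ (s.erase a).erase (f a) ↔ x ∈ s ∧ x ≠ a ∧ x ≠ f a := by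
        intro x; simp [Finset.mem_erase]; tauto
      have hss : (s.erase a).erase (f a) ⊂ s := by
        refine Finset.ssubset_iff_of_subset ?_ |>.mpr ⟨a, ha, ?_⟩
        · intro x hx; exact ((hmem x).mp hx).1
        · intro h
          exact ((hmem a).mp h).2.1 rfl
      have hcard : s.card = ((s.erase a).erase (f a)).card + 2 := by
        have h1 : (s.erase a).card + 1 = s.card := Finset.card_erase_add_one ha
        have h2 : ((s.erase a).erase (f a)).card + 1 = (s.erase a).card :=
          Finset.card_erase_add_one (Finset.mem_erase.mpr ⟨hfa', hfa⟩)
        omega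
      have heven : Even ((s.erase a).erase (f a)).card := by
        refine ih _ hss ?_ ?_ ?_
        · intro x hx
          rw [hmem] at hx ⊢
          obtain ⟨hxs, hxa, hxfa⟩ := hx
          refine ⟨hm x hxs, ?_, ?_⟩
          · intro h
            apply hxfa
            have h2 := hi x hxs
            rw [h] at h2
            exact h2.symm
          · intro h
            apply hxa
            have h2 := hi x hxs
            rw [h, hi a ha] at h2
            exact h2.symm
        · intro x hx; exact hi x ((hmem x).mp hx).1
        · intro x hx; exact hne x ((hmem x).mp hx).1
      rw [hcard]
      obtain ⟨k, hk⟩ := heven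
      exact ⟨k + 1, by omega⟩

lemma card_nbij_compat {α β : Type*} {s : Finset α} {t : Finset β} (i : α → β) (j : β → α)
    (hi : ∀ a ∈ s, i a ∈ t) (hj : ∀ a ∈ t, j a ∈ s)
    (left_inv : ∀ a ∈ s, j (i a) = a) (right_inv : ∀ a ∈ t, i (j a) = a) :
    s.card = t.card :=
  Finset.card_nbij' i j (fun a ha => hi a ha) (fun a ha => hj a ha)
    (fun a ha => left_inv a ha) (fun a ha => right_inv a ha)

lemma mem_nodes {n x : ℕ} : x ∈ nodes n ↔ 1 ≤ x ∧ x ≤ 2*n := Finset.mem_Icc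

lemma xor_helper {A B R A' B' R' : Prop}
    (i1 : (A' ∧ ¬R' ∨ R' ∧ ¬A') ↔ (A ∧ ¬R ∨ R ∧ ¬A))
    (i2 : (B' ∧ ¬R' ∨ R' ∧ ¬B') ↔ (B ∧ ¬R ∨ R ∧ ¬B))
    (h : A ∧ ¬B ∨ B ∧ ¬A) : A' ∧ ¬B' ∨ B' ∧ ¬A' := by tauto

lemma pairing_mem_iff {n : ℕ} {τ : ℕ → ℕ} (hτ : IsPairing n τ) {X : Finset ℕ}
    (hX : Invariant X τ) {x : ℕ} (hx : x ∈ nodes n) :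
    τ x ∈ X ↔ x ∈ X :=
  ⟨fun h => by have := hX _ h; rwa [hτ.invol x hx] at this, hX x⟩

lemma card_symmDiff_aux (X Y : Finset ℕ) :
    (symmDiff X Y).card + 2 * (X ∩ Y).card = X.card + Y.card := by
  have h1 : symmDiff X Y = (X \ Y) ∪ (Y \ X) := symmDiff_def X Y
  have h2 : ((X \ Y) ∪ (Y \ X)).card = (X \ Y).card + (Y \ X).card :=
    Finset.card_union_of_disjoint disjoint_sdiff_sdiff
  have h3 : (X \ Y).card + (X ∩ Y).card = X.card := Finset.card_sdiff_add_card_inter X Y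
  have h4 : (Y \ X).card + (Y ∩ X).card = Y.card := Finset.card_sdiff_add_card_inter Y X
  have h5 : (Y ∩ X).card = (X ∩ Y).card := by rw [Finset.inter_comm]
  rw [h1, h2]
  omega

lemma crossings_parity (n : ℕ) (c : ℕ → Bool) (ρ' : ℕ → ℕ) (S : Finset ℕ)
    (hρ : IsPairing n ρ') (hS : S ⊆ nodes n) (hSbal : BalancedSubset c S)
    (hinv : Invariant S ρ') (h0 : numCrossingsOn S ρ' = 0)
    (h0c : numCrossingsOn (nodes n \ S) ρ' = 0) :
    numCrossings n ρ' % 2 = (S ∩ Tset n c).card % 2 := by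
  have hSiff : ∀ x ∈ nodes n, (ρ' x ∈ S ↔ x ∈ S) := by
    intro x hx
    exact ⟨fun h => by have := hinv _ h; rwa [hρ.invol x hx] at this, hinv x⟩
  have hcomp : ∀ t ∈ nodes n, t ∉ S → ρ' t ∉ S := fun t ht hts h => hts ((hSiff t ht).mp h)
  set N2 : Finset (ℕ × ℕ) := nodes n ×ˢ nodes n with hN2
  have memN2 : ∀ a b : ℕ, (a, b) ∈ N2 ↔ a ∈ nodes n ∧ b ∈ nodes n := by
    intro a b; simp [hN2, Finset.mem_product]
  set X : Finset (ℕ × ℕ) :=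
    N2.filter (fun p => p.1 < p.2 ∧ p.2 < ρ' p.1 ∧ ρ' p.1 < ρ' p.2) with hX
  have hcr : numCrossings n ρ' = X.card := rfl
  set A1 := (X.filter (fun p => p.1 ∈ S)).filter (fun p => p.2 ∈ S) with hA1
  set A2 := (X.filter (fun p => p.1 ∈ S)).filter (fun p => ¬ p.2 ∈ S) with hA2
  set A3 := (X.filter (fun p => ¬ p.1 ∈ S)).filter (fun p => p.2 ∈ S) with hA3
  set A4 := (X.filter (fun p => ¬ p.1 ∈ S)).filter (fun p => ¬ p.2 ∈ S) with hA4
  have s1 : (X.filter (fun p => p.1 ∈ S)).card + (X.filter (fun p => ¬ p.1 ∈ S)).card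
      = X.card := Finset.card_filter_add_card_filter_not _
  have s2 : A1.card + A2.card = (X.filter (fun p => p.1 ∈ S)).card := by
    rw [hA1, hA2]; exact Finset.card_filter_add_card_filter_not _
  have s3 : A3.card + A4.card = (X.filter (fun p => ¬ p.1 ∈ S)).card := by
    rw [hA3, hA4]; exact Finset.card_filter_add_card_filter_not _
  have memA : ∀ (a b : ℕ), ((a, b) ∈ A1 ↔
        ((a ∈ nodes n ∧ b ∈ nodes n) ∧ (a < b ∧ b < ρ' a ∧ ρ' a < ρ' b)) ∧ a ∈ S ∧ b ∈ S)
      ∧ ((a, b) ∈ A2 ↔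
        ((a ∈ nodes n ∧ b ∈ nodes n) ∧ (a < b ∧ b < ρ' a ∧ ρ' a < ρ' b)) ∧ a ∈ S ∧ ¬ b ∈ S)
      ∧ ((a, b) ∈ A3 ↔
        ((a ∈ nodes n ∧ b ∈ nodes n) ∧ (a < b ∧ b < ρ' a ∧ ρ' a < ρ' b)) ∧ ¬ a ∈ S ∧ b ∈ S)
      ∧ ((a, b) ∈ A4 ↔
        ((a ∈ nodes n ∧ b ∈ nodes n) ∧ (a < b ∧ b < ρ' a ∧ ρ' a < ρ' b)) ∧ ¬ a ∈ S ∧ ¬ b ∈ S) := by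
    intro a b
    refine ⟨?_, ?_, ?_, ?_⟩ <;>
      · simp only [hA1, hA2, hA3, hA4, hX, Finset.mem_filter, memN2]
        tauto
  have hA1card : A1.card = 0 := by
    rw [← h0]
    unfold numCrossingsOn
    congr 1
    apply Finset.ext
    rintro ⟨a, b⟩
    rw [(memA a b).1]
    simp only [Finset.mem_filter, Finset.mem_product]
    constructor
    · rintro ⟨⟨-, hq⟩, h1, h2⟩; exact ⟨⟨h1, h2⟩, hq⟩
    · rintro ⟨⟨h1, h2⟩, hq⟩; exact ⟨⟨⟨hS h1, hS h2⟩, hq⟩, h1, h2⟩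
  have hA4card : A4.card = 0 := by
    rw [← h0c]
    unfold numCrossingsOn
    congr 1
    apply Finset.ext
    rintro ⟨a, b⟩
    rw [(memA a b).2.2.2]
    simp only [Finset.mem_filter, Finset.mem_product, Finset.mem_sdiff]
    constructor
    · rintro ⟨⟨⟨hn1, hn2⟩, hq⟩, h1, h2⟩; exact ⟨⟨⟨hn1, h1⟩, hn2, h2⟩, hq⟩
    · rintro ⟨⟨⟨hn1, h1⟩, hn2, h2⟩, hq⟩; exact ⟨⟨⟨hn1, hn2⟩, hq⟩, h1, h2⟩
  -- the set K
  set K : Finset (ℕ × ℕ) :=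
    N2.filter (fun p => p.1 ∈ S ∧ ¬ p.2 ∈ S ∧ p.2 < p.1 ∧ p.1 < ρ' p.2) with hK
  have memK : ∀ a b : ℕ, (a, b) ∈ K ↔
      (a ∈ nodes n ∧ b ∈ nodes n) ∧ a ∈ S ∧ ¬ b ∈ S ∧ b < a ∧ a < ρ' b := by
    intro a b; simp only [hK, Finset.mem_filter, memN2]
  set K1 := K.filter (fun p => ρ' p.1 < p.2) with hK1
  set Krest := K.filter (fun p => ¬ ρ' p.1 < p.2) with hKrest
  set Kin := Krest.filter (fun p => ρ' p.1 < ρ' p.2) with hKinDef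
  set K2 := Krest.filter (fun p => ¬ ρ' p.1 < ρ' p.2) with hK2
  have memK1 : ∀ a b : ℕ, (a, b) ∈ K1 ↔ ((a, b) ∈ K ∧ ρ' a < b) := by
    intro a b; simp only [hK1, Finset.mem_filter]
  have memKin : ∀ a b : ℕ, (a, b) ∈ Kin ↔ (((a, b) ∈ K ∧ ¬ ρ' a < b) ∧ ρ' a < ρ' b) := by
    intro a b; simp only [hKinDef, hKrest, Finset.mem_filter]
  have memK2 : ∀ a b : ℕ, (a, b) ∈ K2 ↔ (((a, b) ∈ K ∧ ¬ ρ' a < b) ∧ ¬ ρ' a < ρ' b) := by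
    intro a b; simp only [hK2, hKrest, Finset.mem_filter]
  have u1 : K1.card + Krest.card = K.card := by
    rw [hK1, hKrest]; exact Finset.card_filter_add_card_filter_not _
  have u2 : Kin.card + K2.card = Krest.card := by
    rw [hKinDef, hK2]; exact Finset.card_filter_add_card_filter_not _
  -- bijection A2 ≃ K1
  have hb2 : A2.card = K1.card := by
    apply card_nbij_compat (i := fun p => (ρ' p.1, p.2)) (j := fun p => (ρ' p.1, p.2))
    · rintro ⟨a, b⟩ hp
      dsimp only
      rw [(memA a b).2.1] at hp
      obtain ⟨⟨⟨hn1, hn2⟩, hq1, hq2, hq3⟩, h1, h2⟩ := hp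
      rw [memK1, memK]
      refine ⟨⟨⟨hρ.maps _ hn1, hn2⟩, hinv _ h1, h2, hq2, hq3⟩, ?_⟩
      rw [hρ.invol _ hn1]
      exact hq1
    · rintro ⟨a, b⟩ hp
      dsimp only
      rw [memK1, memK] at hp
      obtain ⟨⟨⟨hn1, hn2⟩, h1, h2, h3, h4⟩, h5⟩ := hp
      rw [(memA (ρ' a) b).2.1]
      have hri : ρ' (ρ' a) = a := hρ.invol _ hn1
      rw [hri]
      exact ⟨⟨⟨hρ.maps _ hn1, hn2⟩, h5, h3, h4⟩, hinv _ h1, h2⟩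
    · rintro ⟨a, b⟩ hp
      dsimp only
      rw [(memA a b).2.1] at hp
      simp only [Prod.mk.injEq]
      exact ⟨hρ.invol _ hp.1.1.1, trivial⟩
    · rintro ⟨a, b⟩ hp
      dsimp only
      rw [memK1, memK] at hp
      simp only [Prod.mk.injEq]
      exact ⟨hρ.invol _ hp.1.1.1, trivial⟩
  -- bijection A3 ≃ K2
  have hb3 : A3.card = K2.card := by
    apply card_nbij_compat (i := fun p => (p.2, p.1)) (j := fun p => (p.2, p.1))
    · rintro ⟨a, b⟩ hp
      dsimp only
      rw [(memA a b).2.2.1] at hp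
      obtain ⟨⟨⟨hn1, hn2⟩, hq1, hq2, hq3⟩, h1, h2⟩ := hp
      rw [memK2, memK]
      exact ⟨⟨⟨⟨hn2, hn1⟩, h2, h1, hq1, hq2⟩, by omega⟩, by omega⟩
    · rintro ⟨a, b⟩ hp
      dsimp only
      rw [memK2, memK] at hp
      obtain ⟨⟨⟨⟨hn1, hn2⟩, h1, h2, h3, h4⟩, h5⟩, h6⟩ := hp
      rw [(memA b a).2.2.1]
      have hne : ρ' a ≠ ρ' b := by
        intro h
        exact hcomp _ hn2 h2 (h ▸ hinv _ h1)
      exact ⟨⟨⟨hn2, hn1⟩, h3, h4, by omega⟩, h2, h1⟩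
    · rintro ⟨a, b⟩ _; rfl
    · rintro ⟨a, b⟩ _; rfl
  -- Kin has even cardinality
  have hkin : Even Kin.card := by
    apply even_invol (f := fun p => (ρ' p.1, p.2))
    · rintro ⟨a, b⟩ hp
      dsimp only
      rw [memKin, memK] at hp
      obtain ⟨⟨⟨⟨hn1, hn2⟩, h1, h2, h3, h4⟩, h5⟩, h6⟩ := hp
      rw [memKin, memK]
      have hne : ρ' a ≠ b := fun h => h2 (h ▸ hinv _ h1)
      have hri : ρ' (ρ' a) = a := hρ.invol _ hn1
      rw [hri]
      exact ⟨⟨⟨⟨hρ.maps _ hn1, hn2⟩, hinv _ h1, h2, by omega, h6⟩, by omega⟩, h4⟩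
    · rintro ⟨a, b⟩ hp
      dsimp only
      rw [memKin, memK] at hp
      simp only [Prod.mk.injEq]
      exact ⟨hρ.invol _ hp.1.1.1.1, trivial⟩
    · rintro ⟨a, b⟩ hp
      dsimp only
      rw [memKin, memK] at hp
      intro h
      exact hρ.nofix _ hp.1.1.1.1 (congrArg Prod.fst h)
  -- the set G
  set G : Finset (ℕ × ℕ) :=
    N2.filter (fun p => p.1 ∈ S ∧ ¬ p.2 ∈ S ∧ p.1 < p.2) with hG
  have memG : ∀ a b : ℕ, (a, b) ∈ G ↔
      (a ∈ nodes n ∧ b ∈ nodes n) ∧ a ∈ S ∧ ¬ b ∈ S ∧ a < b := by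
    intro a b; simp only [hG, Finset.mem_filter, memN2]
  set Ga := G.filter (fun p => p.1 < ρ' p.2) with hGa
  set Gb := G.filter (fun p => ¬ p.1 < ρ' p.2) with hGb
  have memGa : ∀ a b : ℕ, (a, b) ∈ Ga ↔ ((a, b) ∈ G ∧ a < ρ' b) := by
    intro a b; simp only [hGa, Finset.mem_filter]
  have memGb : ∀ a b : ℕ, (a, b) ∈ Gb ↔ ((a, b) ∈ G ∧ ¬ a < ρ' b) := by
    intro a b; simp only [hGb, Finset.mem_filter]
  have u3 : Ga.card + Gb.card = G.card := by
    rw [hGa, hGb]; exact Finset.card_filter_add_card_filter_not _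
  have hga : Even Ga.card := by
    apply even_invol (f := fun p => (p.1, ρ' p.2))
    · rintro ⟨a, b⟩ hp
      dsimp only
      rw [memGa, memG] at hp
      obtain ⟨⟨⟨hn1, hn2⟩, h1, h2, h3⟩, h4⟩ := hp
      rw [memGa, memG, hρ.invol _ hn2]
      exact ⟨⟨⟨hn1, hρ.maps _ hn2⟩, h1, hcomp _ hn2 h2, h4⟩, h3⟩
    · rintro ⟨a, b⟩ hp
      dsimp only
      rw [memGa, memG] at hp
      simp only [Prod.mk.injEq]
      exact ⟨trivial, hρ.invol _ hp.1.1.2⟩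
    · rintro ⟨a, b⟩ hp
      dsimp only
      rw [memGa, memG] at hp
      intro h
      exact hρ.nofix _ hp.1.1.2 (congrArg Prod.snd h)
  have hgb : Gb.card = K.card := by
    apply card_nbij_compat (i := fun p => (p.1, ρ' p.2)) (j := fun p => (p.1, ρ' p.2))
    · rintro ⟨a, b⟩ hp
      dsimp only
      rw [memGb, memG] at hp
      obtain ⟨⟨⟨hn1, hn2⟩, h1, h2, h3⟩, h4⟩ := hp
      rw [memK, hρ.invol _ hn2]
      have hne : a ≠ ρ' b := fun h => (hcomp _ hn2 h2) (h ▸ h1)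
      exact ⟨⟨hn1, hρ.maps _ hn2⟩, h1, hcomp _ hn2 h2, by omega, h3⟩
    · rintro ⟨a, b⟩ hp
      dsimp only
      rw [memK] at hp
      obtain ⟨⟨hn1, hn2⟩, h1, h2, h3, h4⟩ := hp
      rw [memGb, memG, hρ.invol _ hn2]
      exact ⟨⟨⟨hn1, hρ.maps _ hn2⟩, h1, hcomp _ hn2 h2, h4⟩, by omega⟩
    · rintro ⟨a, b⟩ hp
      dsimp only
      rw [memGb, memG] at hp
      simp only [Prod.mk.injEq]
      exact ⟨trivial, hρ.invol _ hp.1.1.2⟩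
    · rintro ⟨a, b⟩ hp
      dsimp only
      rw [memK] at hp
      simp only [Prod.mk.injEq]
      exact ⟨trivial, hρ.invol _ hp.1.2⟩

  -- the set W and its split
  set W : Finset (ℕ × ℕ) := N2.filter (fun p => p.1 ∈ S ∧ p.1 < p.2) with hW
  set U := W.filter (fun p => p.2 ∈ S) with hU
  set Wn := W.filter (fun p => ¬ p.2 ∈ S) with hWn
  have u4 : U.card + Wn.card = W.card := by
    rw [hU, hWn]; exact Finset.card_filter_add_card_filter_not _
  have hWnG : Wn = G := by
    apply Finset.ext
    rintro ⟨a, b⟩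
    simp only [hWn, hW, hG, Finset.mem_filter, memN2]
    tauto
  -- the set P and its split
  set P : Finset (ℕ × ℕ) := N2.filter (fun p => p.1 ∈ S ∧ p.2 ∈ S) with hP
  have hPcard : P.card = S.card * S.card := by
    have hPeq : P = S ×ˢ S := by
      apply Finset.ext
      rintro ⟨a, b⟩
      simp only [hP, Finset.mem_filter, memN2, Finset.mem_product]
      constructor
      · rintro ⟨-, h3, h4⟩; exact ⟨h3, h4⟩
      · rintro ⟨h3, h4⟩; exact ⟨⟨hS h3, hS h4⟩, h3, h4⟩
    rw [hPeq, Finset.card_product]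
  set Pu := P.filter (fun p => p.1 < p.2) with hPu
  set Pr := P.filter (fun p => ¬ p.1 < p.2) with hPr
  set Pv := Pr.filter (fun p => p.2 < p.1) with hPv
  set Pd := Pr.filter (fun p => ¬ p.2 < p.1) with hPd
  have u5 : Pu.card + Pr.card = P.card := by
    rw [hPu, hPr]; exact Finset.card_filter_add_card_filter_not _
  have u6 : Pv.card + Pd.card = Pr.card := by
    rw [hPv, hPd]; exact Finset.card_filter_add_card_filter_not _
  have memPu : ∀ a b : ℕ, (a, b) ∈ Pu ↔ ((a ∈ nodes n ∧ b ∈ nodes n) ∧ a ∈ S ∧ b ∈ S) ∧ a < b := by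
    intro a b; simp only [hPu, hP, Finset.mem_filter, memN2]
  have memPv : ∀ a b : ℕ,
      (a, b) ∈ Pv ↔ (((a ∈ nodes n ∧ b ∈ nodes n) ∧ a ∈ S ∧ b ∈ S) ∧ ¬ a < b) ∧ b < a := by
    intro a b; simp only [hPv, hPr, hP, Finset.mem_filter, memN2]
  have memPd : ∀ a b : ℕ,
      (a, b) ∈ Pd ↔ (((a ∈ nodes n ∧ b ∈ nodes n) ∧ a ∈ S ∧ b ∈ S) ∧ ¬ a < b) ∧ ¬ b < a := by
    intro a b; simp only [hPd, hPr, hP, Finset.mem_filter, memN2]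
  have hPuU : Pu.card = U.card := by
    congr 1
    apply Finset.ext
    rintro ⟨a, b⟩
    rw [memPu]
    simp only [hU, hW, Finset.mem_filter, memN2]
    tauto
  have hPvu : Pv.card = Pu.card := by
    apply card_nbij_compat (i := fun p => (p.2, p.1)) (j := fun p => (p.2, p.1))
    · rintro ⟨a, b⟩ hp
      dsimp only
      rw [memPv] at hp
      rw [memPu]
      obtain ⟨⟨⟨⟨hn1, hn2⟩, h1, h2⟩, h4⟩, h3⟩ := hp
      exact ⟨⟨⟨hn2, hn1⟩, h2, h1⟩, h3⟩
    · rintro ⟨a, b⟩ hp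
      dsimp only
      rw [memPu] at hp
      rw [memPv]
      obtain ⟨⟨⟨hn1, hn2⟩, h1, h2⟩, h3⟩ := hp
      exact ⟨⟨⟨⟨hn2, hn1⟩, h2, h1⟩, by omega⟩, h3⟩
    · rintro ⟨a, b⟩ _; rfl
    · rintro ⟨a, b⟩ _; rfl
  have hPdS : Pd.card = S.card := by
    apply card_nbij_compat (i := fun p => p.1) (j := fun x => (x, x))
    · rintro ⟨a, b⟩ hp
      rw [memPd] at hp
      exact hp.1.1.2.1
    · intro x hx
      rw [memPd]
      exact ⟨⟨⟨⟨hS hx, hS hx⟩, hx, hx⟩, by omega⟩, by omega⟩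
    · rintro ⟨a, b⟩ hp
      rw [memPd] at hp
      dsimp only
      have : a = b := by
        obtain ⟨⟨h0, h1⟩, h2⟩ := hp
        omega
      rw [this]
    · intro x _; rfl
  -- cardinality of W as a sum
  have hWcard : W.card = ∑ x ∈ S, (2 * n - x) := by
    rw [Finset.card_eq_sum_card_fiberwise (f := Prod.fst) (t := S)
      (fun p hp => by
        rw [Finset.mem_coe, hW, Finset.mem_filter] at hp
        exact hp.2.1)]
    apply Finset.sum_congr rfl
    intro x hx
    have hxn := mem_nodes.mp (hS hx)
    have : (W.filter (fun p => p.1 = x)).card = (Finset.Icc (x + 1) (2 * n)).card := by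
      apply card_nbij_compat (i := fun p => p.2) (j := fun t => (x, t))
      · rintro ⟨a, b⟩ hp
        simp only [hW, Finset.mem_filter, memN2] at hp
        obtain ⟨⟨⟨hn1, hn2⟩, h1, h2⟩, h3⟩ := hp
        dsimp only at h3 ⊢
        subst h3
        rw [Finset.mem_Icc]
        have := mem_nodes.mp hn2
        omega
      · intro t ht
        rw [Finset.mem_Icc] at ht
        simp only [hW, Finset.mem_filter, memN2]
        refine ⟨⟨⟨hS hx, ?_⟩, hx, by omega⟩, trivial⟩
        rw [mem_nodes]
        omega
      · rintro ⟨a, b⟩ hp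
        simp only [hW, Finset.mem_filter] at hp
        dsimp only
        rw [hp.2]
      · intro t _; rfl
    rw [this, Nat.card_Icc]
    omega
  have hWmod : W.card % 2 = (S.filter (fun i => i % 2 = 1)).card % 2 := by
    rw [hWcard, Finset.sum_nat_mod]
    have h1 : ∀ x ∈ S, (2 * n - x) % 2 = (if x % 2 = 1 then 1 else 0) := by
      intro x hx
      have := mem_nodes.mp (hS hx)
      by_cases h : x % 2 = 1 <;> simp [h] <;> omega
    rw [Finset.sum_congr rfl h1, ← Finset.card_filter]
  -- color/parity counts on S
  set B := S.filter (fun i => c i = true) with hB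
  set Wt := S.filter (fun i => c i = false) with hWt
  set Od := S.filter (fun i => i % 2 = 1) with hOd
  set n11 := B.filter (fun i => i % 2 = 1) with hn11
  set n10 := B.filter (fun i => ¬ i % 2 = 1) with hn10
  set n01 := Wt.filter (fun i => i % 2 = 1) with hn01
  set n00 := Wt.filter (fun i => ¬ i % 2 = 1) with hn00
  have u7 : n11.card + n10.card = B.card := by
    rw [hn11, hn10]; exact Finset.card_filter_add_card_filter_not _
  have u8 : n01.card + n00.card = Wt.card := by
    rw [hn01, hn00]; exact Finset.card_filter_add_card_filter_not _
  have u9 : B.card + Wt.card = S.card := by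
    have h := Finset.card_filter_add_card_filter_not (s := S)
      (p := fun i => c i = true)
    have : S.filter (fun i => ¬ c i = true) = Wt := by
      rw [hWt]
      apply Finset.filter_congr
      intro i _
      simp [Bool.not_eq_true]
    rw [this] at h
    rw [← hB] at h
    exact h
  have u10 : (Od.filter (fun i => c i = true)).card
      + (Od.filter (fun i => ¬ c i = true)).card = Od.card :=
    Finset.card_filter_add_card_filter_not _
  have u11 : Od.filter (fun i => c i = true) = n11 := by
    rw [hOd, hn11, hB, Finset.filter_filter, Finset.filter_filter]
    apply Finset.filter_congr
    intro i _
    tauto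
  have u12 : Od.filter (fun i => ¬ c i = true) = n01 := by
    rw [hOd, hn01, hWt, Finset.filter_filter, Finset.filter_filter]
    apply Finset.filter_congr
    intro i _
    simp [Bool.not_eq_true]
    tauto
  -- S ∩ T
  have hST : (S ∩ Tset n c).card = n01.card + n10.card := by
    have hSTeq : S ∩ Tset n c = n01 ∪ n10 := by
      apply Finset.ext
      intro i
      simp only [Finset.mem_inter, Tset, Finset.mem_filter, Finset.mem_union,
        hn01, hn10, hWt, hB]
      constructor
      · rintro ⟨hiS, -, (⟨h1, h2⟩ | ⟨h1, h2⟩)⟩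
        · exact Or.inl ⟨⟨hiS, h2⟩, h1⟩
        · exact Or.inr ⟨⟨hiS, h2⟩, by omega⟩
      · rintro (⟨⟨hiS, h2⟩, h1⟩ | ⟨⟨hiS, h2⟩, h1⟩)
        · exact ⟨hiS, hS hiS, Or.inl ⟨h1, h2⟩⟩
        · exact ⟨hiS, hS hiS, Or.inr ⟨by omega, h2⟩⟩
    rw [hSTeq]
    apply Finset.card_union_of_disjoint
    rw [Finset.disjoint_left]
    intro i hi1 hi2
    simp only [hn01, hn10, hWt, hB, Finset.mem_filter] at hi1 hi2
    rw [hi1.1.2] at hi2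
    exact absurd hi2.1.2 (by simp)
  -- assemble everything
  obtain ⟨e1, he1⟩ := hkin
  obtain ⟨e2, he2⟩ := hga
  have hBW : B.card = Wt.card := by rw [hB, hWt]; exact hSbal
  have hScard2 : S.card = 2 * B.card := by omega
  have hUq : U.card + B.card = 2 * (B.card * B.card) := by
    have h1 : Pu.card + Pu.card + S.card = S.card * S.card := by omega
    rw [hScard2] at h1
    have h2 : (2 * B.card) * (2 * B.card) = 2 * (2 * (B.card * B.card)) := by ring
    omega
  rw [hcr, hST]
  have hu11 : (Od.filter (fun i => c i = true)).card = n11.card := by rw [u11]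
  have hu12 : (Od.filter (fun i => ¬ c i = true)).card = n01.card := by rw [u12]
  have hWnG' : Wn.card = G.card := by rw [hWnG]
  generalize B.card * B.card = q at hUq
  have t1 : X.card = K1.card + K2.card := by omega
  have t2 : K1.card + K2.card + (e1 + e1) = K.card := by omega
  have t3 : K.card + (e2 + e2) = G.card := by omega
  have t4 : U.card + G.card = W.card := by omega
  have t5 : Od.card = n11.card + n01.card := by omega
  omega



/-- Corollary 2.3.8: the parity of the number of crossings of a
black-white pairing preserving `Sᵢ` and planar on `Sᵢ` and its complement is the same for
two balanced sets `S₁`, `S₂` compatible with the same `π` and `ρ`. -/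
theorem statement14 (n : ℕ) (c : ℕ → Bool) (hbal : BalancedColoring n c)
    (π ρ : ℕ → ℕ) (hπ : IsPairing n π) (hπoe : IsOE n π)
    (hρ : IsPairing n ρ) (hρbw : IsBW n c ρ)
    (S₁ S₂ : Finset ℕ) (hS₁ : S₁ ⊆ nodes n) (hS₂ : S₂ ⊆ nodes n)
    (hS₁bal : BalancedSubset c S₁) (hS₂bal : BalancedSubset c S₂)
    (hρS₁ : Invariant S₁ ρ) (hρS₂ : Invariant S₂ ρ)
    (hπS₁ : Invariant (symmDiff S₁ (Tset n c)) π)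
    (hπS₂ : Invariant (symmDiff S₂ (Tset n c)) π)
    (ρ₁ ρ₂ : ℕ → ℕ)
    (hρ₁ : IsPairing n ρ₁) (hρ₁bw : IsBW n c ρ₁) (hρ₁inv : Invariant S₁ ρ₁)
    (h₁S : numCrossingsOn S₁ ρ₁ = 0) (h₁Sc : numCrossingsOn (nodes n \ S₁) ρ₁ = 0)
    (hρ₂ : IsPairing n ρ₂) (hρ₂bw : IsBW n c ρ₂) (hρ₂inv : Invariant S₂ ρ₂)
    (h₂S : numCrossingsOn S₂ ρ₂ = 0) (h₂Sc : numCrossingsOn (nodes n \ S₂) ρ₂ = 0) :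
    numCrossings n ρ₁ % 2 = numCrossings n ρ₂ % 2 := by
  have e1 := crossings_parity n c ρ₁ S₁ hρ₁ hS₁ hS₁bal hρ₁inv h₁S h₁Sc
  have e2 := crossings_parity n c ρ₂ S₂ hρ₂ hS₂ hS₂bal hρ₂inv h₂S h₂Sc
  rw [e1, e2]
  set T : Finset ℕ := Tset n c with hT
  set D : Finset ℕ := symmDiff S₁ S₂ with hD
  have hmemD : ∀ x, x ∈ D ↔ (x ∈ S₁ ∧ x ∉ S₂) ∨ (x ∈ S₂ ∧ x ∉ S₁) := by
    intro x; rw [hD, Finset.mem_symmDiff]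
  have hDsub : D ⊆ nodes n := by
    intro x hx
    rw [hmemD] at hx
    rcases hx with ⟨h, -⟩ | ⟨h, -⟩
    · exact hS₁ h
    · exact hS₂ h
  -- D is ρ-invariant
  have hρD : ∀ x ∈ D, ρ x ∈ D := by
    intro x hx
    have hxn := hDsub hx
    have i1 := pairing_mem_iff hρ hρS₁ hxn
    have i2 := pairing_mem_iff hρ hρS₂ hxn
    rw [hmemD] at hx ⊢
    rcases hx with ⟨h1, h2⟩ | ⟨h1, h2⟩
    · exact Or.inl ⟨i1.mpr h1, fun h => h2 (i2.mp h)⟩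
    · exact Or.inr ⟨i2.mpr h1, fun h => h2 (i1.mp h)⟩
  -- D is π-invariant
  have hπD : ∀ x ∈ D, π x ∈ D := by
    intro x hx
    have hxn := hDsub hx
    have i1 := pairing_mem_iff hπ hπS₁ hxn
    have i2 := pairing_mem_iff hπ hπS₂ hxn
    rw [Finset.mem_symmDiff, Finset.mem_symmDiff] at i1 i2
    rw [hmemD] at hx ⊢
    exact xor_helper i1 i2 hx
  -- equal number of blacks and whites in D
  have hblk : (D.filter (fun i => c i = true)).card
      = (D.filter (fun i => c i = false)).card := by
    apply card_nbij_compat (i := ρ) (j := ρ)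
    · intro x hx
      rw [Finset.mem_filter] at hx ⊢
      refine ⟨hρD _ hx.1, ?_⟩
      rw [hρbw _ (hDsub hx.1), hx.2]
      rfl
    · intro x hx
      rw [Finset.mem_filter] at hx ⊢
      refine ⟨hρD _ hx.1, ?_⟩
      rw [hρbw _ (hDsub hx.1), hx.2]
      rfl
    · intro x hx
      exact hρ.invol _ (hDsub (Finset.mem_filter.mp hx).1)
    · intro x hx
      exact hρ.invol _ (hDsub (Finset.mem_filter.mp hx).1)
  -- equal number of odds and evens in D
  have hodd : (D.filter (fun i => i % 2 = 1)).card
      = (D.filter (fun i => ¬ i % 2 = 1)).card := by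
    apply card_nbij_compat (i := π) (j := π)
    · intro x hx
      rw [Finset.mem_filter] at hx ⊢
      refine ⟨hπD _ hx.1, ?_⟩
      have := hπoe _ (hDsub hx.1)
      have h2 : x % 2 = 1 := hx.2
      omega
    · intro x hx
      rw [Finset.mem_filter] at hx ⊢
      refine ⟨hπD _ hx.1, ?_⟩
      have := hπoe _ (hDsub hx.1)
      have h2 : ¬ x % 2 = 1 := hx.2
      omega
    · intro x hx
      exact hπ.invol _ (hDsub (Finset.mem_filter.mp hx).1)
    · intro x hx
      exact hπ.invol _ (hDsub (Finset.mem_filter.mp hx).1)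
  -- (D ∩ T).card is even
  have hDT : (D ∩ T).card % 2 = 0 := by
    set B := D.filter (fun i => c i = true) with hB
    set Wt := D.filter (fun i => c i = false) with hWt
    set Od := D.filter (fun i => i % 2 = 1) with hOd
    set m11 := B.filter (fun i => i % 2 = 1) with hm11
    set m10 := B.filter (fun i => ¬ i % 2 = 1) with hm10
    set m01 := Wt.filter (fun i => i % 2 = 1) with hm01
    set m00 := Wt.filter (fun i => ¬ i % 2 = 1) with hm00
    have u7 : m11.card + m10.card = B.card := by
      rw [hm11, hm10]; exact Finset.card_filter_add_card_filter_not _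
    have u8 : m01.card + m00.card = Wt.card := by
      rw [hm01, hm00]; exact Finset.card_filter_add_card_filter_not _
    have u10 : (Od.filter (fun i => c i = true)).card
        + (Od.filter (fun i => ¬ c i = true)).card = Od.card :=
      Finset.card_filter_add_card_filter_not _
    have u11 : Od.filter (fun i => c i = true) = m11 := by
      rw [hOd, hm11, hB, Finset.filter_filter, Finset.filter_filter]
      apply Finset.filter_congr
      intro i _
      tauto
    have u12 : Od.filter (fun i => ¬ c i = true) = m01 := by
      rw [hOd, hm01, hWt, Finset.filter_filter, Finset.filter_filter]
      apply Finset.filter_congr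
      intro i _
      simp [Bool.not_eq_true]
      tauto
    have hoddsplit : (D.filter (fun i => ¬ i % 2 = 1)).card
        = (D.filter (fun i => ¬ i % 2 = 1)).card := rfl
    have u13 : (D.filter (fun i => ¬ i % 2 = 1)).card + Od.card = D.card := by
      rw [hOd]
      have := Finset.card_filter_add_card_filter_not (s := D)
        (p := fun i => i % 2 = 1)
      omega
    have u14 : B.card + Wt.card = D.card := by
      have h := Finset.card_filter_add_card_filter_not (s := D)
        (p := fun i => c i = true)
      have h2 : D.filter (fun i => ¬ c i = true) = Wt := by
        rw [hWt]
        apply Finset.filter_congr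
        intro i _
        simp [Bool.not_eq_true]
      rw [h2] at h
      rw [← hB] at h
      exact h
    have hDTeq : D ∩ T = m01 ∪ m10 := by
      apply Finset.ext
      intro i
      simp only [Finset.mem_inter, hT, Tset, Finset.mem_filter, Finset.mem_union,
        hm01, hm10, hWt, hB]
      constructor
      · rintro ⟨hiD, -, (⟨h1, h2⟩ | ⟨h1, h2⟩)⟩
        · exact Or.inl ⟨⟨hiD, h2⟩, h1⟩
        · exact Or.inr ⟨⟨hiD, h2⟩, by omega⟩
      · rintro (⟨⟨hiD, h2⟩, h1⟩ | ⟨⟨hiD, h2⟩, h1⟩)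
        · exact ⟨hiD, hDsub hiD, Or.inl ⟨h1, h2⟩⟩
        · exact ⟨hiD, hDsub hiD, Or.inr ⟨by omega, h2⟩⟩
    have hDTcard : (D ∩ T).card = m01.card + m10.card := by
      rw [hDTeq]
      apply Finset.card_union_of_disjoint
      rw [Finset.disjoint_left]
      intro i hi1 hi2
      simp only [hm01, hm10, hWt, hB, Finset.mem_filter] at hi1 hi2
      rw [hi1.1.2] at hi2
      exact absurd hi2.1.2 (by simp)
    have hu11 : (Od.filter (fun i => c i = true)).card = m11.card := by rw [u11]
    have hu12 : (Od.filter (fun i => ¬ c i = true)).card = m01.card := by rw [u12]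
    -- blacks = whites and odds = evens force m01 = m10
    omega
  -- compare S₁ ∩ T and S₂ ∩ T
  have hsd : symmDiff (S₁ ∩ T) (S₂ ∩ T) = D ∩ T := by
    apply Finset.ext
    intro i
    simp only [Finset.mem_symmDiff, Finset.mem_inter, hmemD]
    tauto
  have hcards := card_symmDiff_aux (S₁ ∩ T) (S₂ ∩ T)
  rw [hsd] at hcards
  omega

end DD
end

section
/- (Desnanot–Jacobi identity) Let M be an n×n matrix over a commutative ring with n ≥ 2, and let 1 ≤ i < j ≤ n. Then det(M) · det(M_{i,j}^{i,j}) = det(M_i^i) · det(M_j^j) − det(M_i^j) · det(M_j^i). -/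
namespace DD

/-- The matrix obtained from `M` by deleting row `i` and column `j`. -/
def delRC {R : Type*} [CommRing R] {m : ℕ} (M : Matrix (Fin (m + 1)) (Fin (m + 1)) R)
    (i j : Fin (m + 1)) : Matrix (Fin m) (Fin m) R :=
  M.submatrix i.succAbove j.succAbove

/-- The matrix obtained from `M` by deleting rows `i`, `j` and columns `i`, `j`
(for `i < j`): first delete row/column `j`, then row/column `i`. -/
def delRC2 {R : Type*} [CommRing R] {m : ℕ} (M : Matrix (Fin (m + 2)) (Fin (m + 2)) R)
    (i j : Fin (m + 2)) (h : i < j) : Matrix (Fin m) (Fin m) R :=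
  delRC (delRC M j j)
    ⟨i.val, lt_of_lt_of_le (Fin.lt_def.mp h) (Nat.lt_succ_iff.mp j.isLt)⟩
    ⟨i.val, lt_of_lt_of_le (Fin.lt_def.mp h) (Nat.lt_succ_iff.mp j.isLt)⟩

open Matrix

section Aux

variable {R : Type*} [CommRing R] {m : ℕ}

lemma perm_classify {α : Type*} [DecidableEq α] (σ : Equiv.Perm α) {i j : α} (hij : i ≠ j)
    (hfix : ∀ l, l ≠ i → l ≠ j → σ l = l) : σ = 1 ∨ σ = Equiv.swap i j := by
  have key : ∀ l, l = i ∨ l = j → σ l = i ∨ σ l = j := by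
    intro l hl
    by_contra hc
    push_neg at hc
    have h2 : σ l = l := σ.injective (hfix _ hc.1 hc.2)
    rcases hl with rfl | rfl
    · exact hc.1 h2
    · exact hc.2 h2
  rcases key i (Or.inl rfl) with hi | hi
  · left
    apply Equiv.ext; intro l
    simp only [Equiv.Perm.one_apply]
    rcases eq_or_ne l i with rfl | hli
    · exact hi
    rcases eq_or_ne l j with rfl | hlj
    · rcases key l (Or.inr rfl) with hj | hj
      · exact absurd (σ.injective (hj.trans hi.symm)) hli
      · exact hj
    · exact hfix l hli hlj
  · right
    have hj : σ j = i := by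
      rcases key j (Or.inr rfl) with hj | hj
      · exact hj
      · exact absurd (σ.injective (hi.trans hj.symm)) hij
    apply Equiv.ext; intro l
    rcases eq_or_ne l i with rfl | hli
    · simp [hi, Equiv.swap_apply_left]
    rcases eq_or_ne l j with rfl | hlj
    · simp [hj, Equiv.swap_apply_right]
    · simp [hfix l hli hlj, Equiv.swap_apply_of_ne_of_ne hli hlj]

lemma updateColumn_comm {n : ℕ} (A : Matrix (Fin n) (Fin n) R) {i j : Fin n} (h : i ≠ j)
    (b c : Fin n → R) :
    (A.updateCol i b).updateCol j c = (A.updateCol j c).updateCol i b := by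
  ext k l
  by_cases hl : l = j <;> by_cases hl' : l = i <;>
    simp_all [updateCol_apply]

/-- determinant of the identity with two columns replaced -/
lemma det_two_updateColumn_one {n : ℕ} {i j : Fin n} (hij : i ≠ j) (b c : Fin n → R) :
    ((((1 : Matrix (Fin n) (Fin n) R)).updateCol i b).updateCol j c).det
      = b i * c j - c i * b j := by
  classical
  set N := (((1 : Matrix (Fin n) (Fin n) R)).updateCol i b).updateCol j c with hN
  have hNi : ∀ k, N k i = b k := by
    intro k; simp [hN, updateCol_apply, hij]
  have hNj : ∀ k, N k j = c k := by
    intro k; simp [hN, updateCol_apply]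
  have hNo : ∀ k l, l ≠ i → l ≠ j → N k l = (1 : Matrix (Fin n) (Fin n) R) k l := by
    intro k l hli hlj; simp [hN, updateCol_apply, hli, hlj]
  rw [det_apply']
  rw [← Finset.sum_subset (Finset.subset_univ ({1, Equiv.swap i j} : Finset (Equiv.Perm (Fin n))))]
  · have hone : (1 : Equiv.Perm (Fin n)) ∉ ({Equiv.swap i j} : Finset (Equiv.Perm (Fin n))) := by
      simp only [Finset.mem_singleton]
      intro hc
      have := Equiv.ext_iff.mp hc i
      simp [Equiv.swap_apply_left] at this
      exact hij this
    rw [Finset.sum_insert hone, Finset.sum_singleton]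
    have p1 : ∏ l, N ((1 : Equiv.Perm (Fin n)) l) l = b i * c j := by
      rw [← Finset.prod_subset (Finset.subset_univ ({i, j} : Finset (Fin n)))
        (fun l _ hl => ?_)]
      · rw [Finset.prod_pair hij, Equiv.Perm.one_apply, Equiv.Perm.one_apply, hNi, hNj]
      · simp only [Finset.mem_insert, Finset.mem_singleton, not_or] at hl
        rw [Equiv.Perm.one_apply, hNo _ _ hl.1 hl.2, one_apply_eq]
    have p2 : ∏ l, N ((Equiv.swap i j) l) l = b j * c i := by
      rw [← Finset.prod_subset (Finset.subset_univ ({i, j} : Finset (Fin n)))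
        (fun l _ hl => ?_)]
      · rw [Finset.prod_pair hij, Equiv.swap_apply_left, Equiv.swap_apply_right, hNi, hNj]
      · simp only [Finset.mem_insert, Finset.mem_singleton, not_or] at hl
        rw [Equiv.swap_apply_of_ne_of_ne hl.1 hl.2, hNo _ _ hl.1 hl.2, one_apply_eq]
    rw [p1, p2]
    simp [Equiv.Perm.sign_swap hij]
    ring
  · intro σ _ hσ
    have : ∃ l, l ≠ i ∧ l ≠ j ∧ σ l ≠ l := by
      by_contra hc
      push_neg at hc
      rcases perm_classify σ hij (fun l h1 h2 => hc l h1 h2) with rfl | rfl <;>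
        simp_all [Finset.mem_insert, Finset.mem_singleton]
    obtain ⟨l, hli, hlj, hl⟩ := this
    have h0 : N (σ l) l = 0 := by
      rw [hNo _ _ hli hlj, one_apply_ne hl]
    have hz : ∏ x, N (σ x) x = 0 := Finset.prod_eq_zero (Finset.mem_univ l) h0
    rw [hz, mul_zero]

/-- expanding the determinant along a column equal to a standard basis vector -/
lemma det_updateColumn_single (A : Matrix (Fin (m + 1)) (Fin (m + 1)) R) (j : Fin (m + 1)) :
    (A.updateCol j (Pi.single j 1)).det = (delRC A j j).det := by
  rw [← det_transpose, ← updateRow_transpose, ← adjugate_apply,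
    adjugate_fin_succ_eq_det_submatrix]
  have : ((-1 : R)) ^ ((j : ℕ) + (j : ℕ)) = 1 := by
    rw [← two_mul, pow_mul, neg_one_sq, one_pow]
  rw [this, one_mul, delRC, ← det_transpose, transpose_submatrix, transpose_transpose]

lemma submatrix_updateColumn_of_lt (A : Matrix (Fin (m + 2)) (Fin (m + 2)) R)
    {i j : Fin (m + 2)} (h : i < j) (b : Fin (m + 2) → R) :
    (A.updateCol i b).submatrix j.succAbove j.succAbove
      = (A.submatrix j.succAbove j.succAbove).updateCol
          ⟨i.val, lt_of_lt_of_le (Fin.lt_def.mp h) (Nat.lt_succ_iff.mp j.isLt)⟩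
          (b ∘ j.succAbove) := by
  have hsa : j.succAbove ⟨i.val,
      lt_of_lt_of_le (Fin.lt_def.mp h) (Nat.lt_succ_iff.mp j.isLt)⟩ = i := by
    rw [Fin.succAbove_of_castSucc_lt]
    · rfl
    · exact h
  ext k l
  rcases eq_or_ne l ⟨i.val,
      lt_of_lt_of_le (Fin.lt_def.mp h) (Nat.lt_succ_iff.mp j.isLt)⟩ with rfl | hl
  · simp [updateCol_apply, hsa]
  · have : j.succAbove l ≠ i := fun hc => hl (j.succAbove_right_injective (hc.trans hsa.symm))
    simp [updateCol_apply, hl, this]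

lemma succAbove_mk_of_lt {i j : Fin (m + 2)} (h : i < j) :
    j.succAbove ⟨i.val,
      lt_of_lt_of_le (Fin.lt_def.mp h) (Nat.lt_succ_iff.mp j.isLt)⟩ = i := by
  rw [Fin.succAbove_of_castSucc_lt]
  · rfl
  · exact h

lemma statement16_aux (M : Matrix (Fin (m + 2)) (Fin (m + 2)) R) (i j : Fin (m + 2))
    (h : i < j) :
    M.det * ((delRC M i i).det * (delRC M j j).det
        - (delRC M i j).det * (delRC M j i).det)
      = M.det * (M.det * (delRC2 M i j h).det) := by
  have hij : i ≠ j := h.ne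
  set i' : Fin (m + 1) :=
    ⟨i.val, lt_of_lt_of_le (Fin.lt_def.mp h) (Nat.lt_succ_iff.mp j.isLt)⟩ with hi'
  set N := (((1 : Matrix (Fin (m + 2)) (Fin (m + 2)) R)).updateCol i
      (fun k => adjugate M k i)).updateCol j (fun k => adjugate M k j) with hNdef
  -- determinant of N
  have hdetN : N.det = (delRC M i i).det * (delRC M j j).det
      - (delRC M i j).det * (delRC M j i).det := by
    rw [hNdef, det_two_updateColumn_one hij]
    rw [adjugate_fin_succ_eq_det_submatrix, adjugate_fin_succ_eq_det_submatrix,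
      adjugate_fin_succ_eq_det_submatrix, adjugate_fin_succ_eq_det_submatrix]
    have e1 : ∀ a : Fin (m + 2), ((-1 : R)) ^ ((a : ℕ) + (a : ℕ)) = 1 := fun a => by
      rw [← two_mul, pow_mul, neg_one_sq, one_pow]
    have e2 : ((-1 : R)) ^ ((j : ℕ) + (i : ℕ)) * ((-1 : R)) ^ ((i : ℕ) + (j : ℕ)) = 1 := by
      rw [← pow_add, show ((j : ℕ) + i) + ((i : ℕ) + j) = 2 * (i + j) by ring,
        pow_mul, neg_one_sq, one_pow]
    rw [e1 i, e1 j, one_mul, one_mul, mul_mul_mul_comm, e2, one_mul]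
    unfold delRC
    ring
  -- M * N
  have hcol : ∀ k l : Fin (m + 2), ∑ t, M k t * adjugate M t l
      = M.det * (1 : Matrix (Fin (m + 2)) (Fin (m + 2)) R) k l := by
    intro k l
    have := congrFun (congrFun (mul_adjugate M) k) l
    rwa [mul_apply, Matrix.smul_apply, smul_eq_mul] at this
  have hMN : M * N = (M.updateCol i (M.det • (Pi.single i 1 : Fin (m + 2) → R))).updateCol j
      (M.det • (Pi.single j 1 : Fin (m + 2) → R)) := by
    ext k l
    rcases eq_or_ne l j with rfl | hlj
    · have : ∀ t, N t l = adjugate M t l := fun t => by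
        simp [hNdef, updateCol_apply]
      rw [mul_apply]
      simp only [this]
      rw [hcol, updateCol_self, Pi.smul_apply, smul_eq_mul, one_apply, Pi.single_apply]
    rcases eq_or_ne l i with rfl | hli
    · have : ∀ t, N t l = adjugate M t l := fun t => by
        simp [hNdef, updateCol_apply, hlj]
      rw [mul_apply]
      simp only [this]
      rw [hcol, updateCol_ne hlj, updateCol_self, Pi.smul_apply, smul_eq_mul,
        one_apply, Pi.single_apply]
    · have : ∀ t, N t l = (1 : Matrix (Fin (m + 2)) (Fin (m + 2)) R) t l := fun t => by
        simp [hNdef, updateCol_apply, hlj, hli]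
      rw [mul_apply]
      simp only [this]
      have h1 := congrFun (congrFun (mul_one M) k) l
      rw [mul_apply] at h1
      rw [h1, updateCol_ne hlj, updateCol_ne hli]
  -- determinant of M * N
  have hdetMN : (M * N).det = M.det * (M.det * (delRC2 M i j h).det) := by
    rw [hMN, det_updateCol_smul, updateColumn_comm _ hij, det_updateCol_smul,
      updateColumn_comm _ hij.symm, det_updateColumn_single]
    congr 1
    congr 1
    have hsub : delRC (M.updateCol i (Pi.single i 1)) j j
        = (delRC M j j).updateCol i' ((Pi.single i 1) ∘ j.succAbove) := by
      unfold delRC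
      exact submatrix_updateColumn_of_lt M h _
    have hcomp : (Pi.single i (1 : R)) ∘ j.succAbove = Pi.single i' 1 := by
      funext k
      rcases eq_or_ne k i' with rfl | hk
      · simp only [Function.comp_apply, Pi.single_eq_same]
        rw [hi', succAbove_mk_of_lt h, Pi.single_eq_same]
      · have hne : j.succAbove k ≠ i := fun hc =>
          hk (j.succAbove_right_injective (hc.trans (succAbove_mk_of_lt h).symm))
        simp [Function.comp_apply, Pi.single_eq_of_ne hne, Pi.single_eq_of_ne hk]
    rw [hsub, hcomp, det_updateColumn_single]
    rfl
  calc M.det * ((delRC M i i).det * (delRC M j j).det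
        - (delRC M i j).det * (delRC M j i).det)
      = M.det * N.det := by rw [hdetN]
    _ = (M * N).det := (det_mul M N).symm
    _ = M.det * (M.det * (delRC2 M i j h).det) := hdetMN

theorem statement16_domain {S : Type*} [CommRing S] [IsDomain S] {m : ℕ}
    (M : Matrix (Fin (m + 2)) (Fin (m + 2)) S) (hM : M.det ≠ 0) (i j : Fin (m + 2))
    (h : i < j) :
    M.det * (delRC2 M i j h).det
      = (delRC M i i).det * (delRC M j j).det
        - (delRC M i j).det * (delRC M j i).det :=
  (mul_left_cancel₀ hM (statement16_aux M i j h).symm)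

end Aux

/-- Desnanot–Jacobi identity: for an `n × n` matrix `M` with `n ≥ 2`
and `1 ≤ i < j ≤ n`,
`det(M) · det(M_{i,j}^{i,j}) = det(M_i^i) · det(M_j^j) − det(M_i^j) · det(M_j^i)`. -/
theorem statement16 {R : Type*} [CommRing R] {m : ℕ}
    (M : Matrix (Fin (m + 2)) (Fin (m + 2)) R) (i j : Fin (m + 2)) (h : i < j) :
    M.det * (delRC2 M i j h).det
      = (delRC M i i).det * (delRC M j j).det
        - (delRC M i j).det * (delRC M j i).det := by
  classical
  set φ : MvPolynomial (Fin (m + 2) × Fin (m + 2)) ℤ →+* R :=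
    MvPolynomial.eval₂Hom (Int.castRingHom R) fun p => M p.1 p.2 with hφdef
  set X := mvPolynomialX (Fin (m + 2)) (Fin (m + 2)) ℤ with hXdef
  have hmap : X.map φ = M := mvPolynomialX_map_eval₂ (Int.castRingHom R) M
  have hgen := statement16_domain X (det_mvPolynomialX_ne_zero _ _) i j h
  have hdel : ∀ (k : ℕ)
      (A : Matrix (Fin (k + 1)) (Fin (k + 1)) (MvPolynomial (Fin (m + 2) × Fin (m + 2)) ℤ))
      (a b : Fin (k + 1)), (delRC A a b).map φ = delRC (A.map φ) a b := fun k A a b => by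
    unfold delRC; rw [submatrix_map]
  have hdel2 : (delRC2 X i j h).map φ = delRC2 (X.map φ) i j h := by
    unfold delRC2
    rw [hdel, hdel]
  have hgen' := congrArg φ hgen
  rw [_root_.map_mul, _root_.map_sub, _root_.map_mul, _root_.map_mul] at hgen'
  simp only [RingHom.map_det, RingHom.mapMatrix_apply, hdel, hdel2, hmap] at hgen'
  exact hgen'

end DD
end

section
/- Let π be a planar odd-even pairing of N = {1,…,2n}. Then the number of inversions of π equals the number of nestings of π. -/
namespace DD

/-- for a planar odd-even pairing `π`, the number of inversions equals
the number of nestings. -/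
theorem statement19 (n : ℕ) (π : ℕ → ℕ) (hπ : IsPairing n π)
    (hoe : IsOE n π) (hpl : IsPlanar n π) :
    ((nodes n ×ˢ nodes n).filter
        (fun p => p.1 % 2 = 1 ∧ p.2 % 2 = 1 ∧ p.1 < p.2 ∧ π p.2 < π p.1)).card
      = ((nodes n ×ˢ nodes n).filter
        (fun p => p.1 < π p.1 ∧ p.2 < π p.2 ∧ p.1 < p.2 ∧ π p.2 < π p.1)).card := by
  classical
  obtain ⟨hmap, hinvol, hfix⟩ := hπ
  have hinj : ∀ u ∈ nodes n, ∀ v ∈ nodes n, π u = π v → u = v := fun u hu v hv h => by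
    rw [← hinvol u hu, h, hinvol v hv]
  have key : ∀ a ∈ nodes n, ∀ b ∈ nodes n, a < b → b < π a → π b < π a := by
    intro a ha b hb hab h
    have hz : ((nodes n ×ˢ nodes n).filter
        (fun p => p.1 < p.2 ∧ p.2 < π p.1 ∧ π p.1 < π p.2)) = ∅ :=
      Finset.card_eq_zero.mp hpl
    have hnot : ¬ (π a < π b) := by
      intro hc
      have hm : (a, b) ∈ ((nodes n ×ˢ nodes n).filter
          (fun p => p.1 < p.2 ∧ p.2 < π p.1 ∧ π p.1 < π p.2)) := by
        simp only [Finset.mem_filter, Finset.mem_product]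
        exact ⟨⟨ha, hb⟩, hab, h, hc⟩
      rw [hz] at hm; exact absurd hm (Finset.notMem_empty _)
    have hne : π b ≠ π a := fun h' => by have := hinj b hb a ha h'; omega
    omega
  -- nestedness of inverted pairs
  have nested : ∀ a ∈ nodes n, ∀ b ∈ nodes n, a % 2 = 1 → b % 2 = 1 → a < b → π b < π a →
      (min a (π a) < min b (π b) ∧ max b (π b) < max a (π a)) ∨
      (min b (π b) < min a (π a) ∧ max a (π a) < max b (π b)) := by
    intro a ha b hb hao hbo hab hrev
    have hpa := hoe a ha; have hpb := hoe b hb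
    have hfa := hfix a ha; have hfb := hfix b hb
    have hia := hinvol a ha; have hib := hinvol b hb
    have hpbmem := hmap b hb
    have h2a : a % 2 < 2 := Nat.mod_lt _ (by norm_num)
    have h2pa : π a % 2 < 2 := Nat.mod_lt _ (by norm_num)
    have h2pb : π b % 2 < 2 := Nat.mod_lt _ (by norm_num)
    rcases lt_trichotomy a (π a) with h1 | h1 | h1
    · rcases lt_trichotomy b (π b) with h2 | h2 | h2
      · left; omega
      · exact absurd h2.symm hfb
      · rcases lt_or_gt_of_ne (show a ≠ π b by omega) with h3 | h3
        · have hk := key a ha (π b) hpbmem h3 (by omega)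
          rw [hib] at hk
          left; omega
        · have hk := key (π b) hpbmem a ha h3 (by rw [hib]; omega)
          rw [hib] at hk
          right; omega
    · exact absurd h1.symm hfa
    · rcases lt_trichotomy b (π b) with h2 | h2 | h2
      · omega
      · exact absurd h2.symm hfb
      · right; omega
  refine Finset.card_nbij'
    (fun p => (min (min p.1 (π p.1)) (min p.2 (π p.2)),
               max (min p.1 (π p.1)) (min p.2 (π p.2))))
    (fun q => (min (if q.1 % 2 = 1 then q.1 else π q.1) (if q.2 % 2 = 1 then q.2 else π q.2),
               max (if q.1 % 2 = 1 then q.1 else π q.1) (if q.2 % 2 = 1 then q.2 else π q.2)))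
    ?_ ?_ ?_ ?_
  · -- f maps inversions to nestings
    intro p hm; obtain ⟨a, b⟩ := p
    simp only [Finset.mem_coe, Finset.mem_filter, Finset.mem_product] at hm ⊢
    obtain ⟨⟨ha, hb⟩, hao, hbo, hab, hrev⟩ := hm
    have hpamem := hmap a ha; have hpbmem := hmap b hb
    have hia := hinvol a ha; have hib := hinvol b hb
    have hfa := hfix a ha; have hfb := hfix b hb
    have e1 : π (min a (π a)) = max a (π a) := by
      rcases le_total a (π a) with h | h
      · rw [min_eq_left h, max_eq_right h]
      · rw [min_eq_right h, max_eq_left h, hia]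
    have e2 : π (min b (π b)) = max b (π b) := by
      rcases le_total b (π b) with h | h
      · rw [min_eq_left h, max_eq_right h]
      · rw [min_eq_right h, max_eq_left h, hib]
    have hnest := nested a ha b hb hao hbo hab hrev
    have hne : min a (π a) ≠ min b (π b) := by omega
    have hmem1 : min a (π a) ∈ nodes n := by
      rcases min_choice a (π a) with h | h <;> rw [h] <;> assumption
    have hmem2 : min b (π b) ∈ nodes n := by
      rcases min_choice b (π b) with h | h <;> rw [h] <;> assumption
    rcases lt_or_gt_of_ne hne with h | h
    · rw [min_eq_left h.le, max_eq_right h.le]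
      have hpa := hoe a ha; have hpb := hoe b hb
      refine ⟨⟨hmem1, hmem2⟩, ?_, ?_, h, ?_⟩ <;> omega
    · rw [min_eq_right h.le, max_eq_left h.le]
      refine ⟨⟨hmem2, hmem1⟩, ?_, ?_, h, ?_⟩ <;> omega
  · -- g maps nestings to inversions
    intro p hm; obtain ⟨x, y⟩ := p
    simp only [Finset.mem_coe, Finset.mem_filter, Finset.mem_product] at hm ⊢
    obtain ⟨⟨hx, hy⟩, hx1, hy1, hxy, hrev⟩ := hm
    have hpxmem := hmap x hx; have hpymem := hmap y hy
    have hix := hinvol x hx; have hiy := hinvol y hy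
    have hpx := hoe x hx; have hpy := hoe y hy
    have h2x : x % 2 < 2 := Nat.mod_lt _ (by norm_num)
    have h2px : π x % 2 < 2 := Nat.mod_lt _ (by norm_num)
    have h2y : y % 2 < 2 := Nat.mod_lt _ (by norm_num)
    have h2py : π y % 2 < 2 := Nat.mod_lt _ (by norm_num)
    have pox : ((if x % 2 = 1 then x else π x) = x ∧ π (if x % 2 = 1 then x else π x) = π x ∧ x % 2 = 1)
        ∨ ((if x % 2 = 1 then x else π x) = π x ∧ π (if x % 2 = 1 then x else π x) = x ∧ π x % 2 = 1) := by
      by_cases hc : x % 2 = 1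
      · left; simp [hc]
      · right; simp [hc, hix]; omega
    have poy : ((if y % 2 = 1 then y else π y) = y ∧ π (if y % 2 = 1 then y else π y) = π y ∧ y % 2 = 1)
        ∨ ((if y % 2 = 1 then y else π y) = π y ∧ π (if y % 2 = 1 then y else π y) = y ∧ π y % 2 = 1) := by
      by_cases hc : y % 2 = 1
      · left; simp [hc]
      · right; simp [hc, hiy]; omega
    set ox := if x % 2 = 1 then x else π x with hoxd
    set oy := if y % 2 = 1 then y else π y with hoyd
    have hmemx : ox ∈ nodes n := by rw [hoxd]; split <;> assumption
    have hmemy : oy ∈ nodes n := by rw [hoyd]; split <;> assumption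
    have hne : ox ≠ oy := by rcases pox with ⟨e1,e2,e3⟩|⟨e1,e2,e3⟩ <;>
      rcases poy with ⟨f1,f2,f3⟩|⟨f1,f2,f3⟩ <;> omega
    rcases lt_or_gt_of_ne hne with h | h
    · rw [min_eq_left h.le, max_eq_right h.le]
      refine ⟨⟨hmemx, hmemy⟩, ?_, ?_, h, ?_⟩ <;>
        rcases pox with ⟨e1,e2,e3⟩|⟨e1,e2,e3⟩ <;>
        rcases poy with ⟨f1,f2,f3⟩|⟨f1,f2,f3⟩ <;> omega
    · rw [min_eq_right h.le, max_eq_left h.le]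
      refine ⟨⟨hmemy, hmemx⟩, ?_, ?_, h, ?_⟩ <;>
        rcases pox with ⟨e1,e2,e3⟩|⟨e1,e2,e3⟩ <;>
        rcases poy with ⟨f1,f2,f3⟩|⟨f1,f2,f3⟩ <;> omega
  · -- g (f p) = p
    intro p hm; obtain ⟨a, b⟩ := p
    simp only [Finset.mem_coe, Finset.mem_filter, Finset.mem_product] at hm
    obtain ⟨⟨ha, hb⟩, hao, hbo, hab, hrev⟩ := hm
    have hpamem := hmap a ha; have hpbmem := hmap b hb
    have hia := hinvol a ha; have hib := hinvol b hb
    have hpa := hoe a ha; have hpb := hoe b hb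
    have h2pa : π a % 2 < 2 := Nat.mod_lt _ (by norm_num)
    have h2pb : π b % 2 < 2 := Nat.mod_lt _ (by norm_num)
    have od1 : (if (min a (π a)) % 2 = 1 then min a (π a) else π (min a (π a))) = a := by
      rcases le_total a (π a) with h | h
      · rw [min_eq_left h]; simp [hao]
      · rw [min_eq_right h]; have : ¬ (π a % 2 = 1) := by omega
        simp [this, hia]
    have od2 : (if (min b (π b)) % 2 = 1 then min b (π b) else π (min b (π b))) = b := by
      rcases le_total b (π b) with h | h
      · rw [min_eq_left h]; simp [hbo]
      · rw [min_eq_right h]; have : ¬ (π b % 2 = 1) := by omega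
        simp [this, hib]
    have hinj' : π a ≠ π b := fun h => by have := hinj a ha b hb h; omega
    have hne : min a (π a) ≠ min b (π b) := by omega
    rcases lt_or_gt_of_ne hne with h | h
    · simp only [min_eq_left h.le, max_eq_right h.le, od1, od2]
      rw [min_eq_left hab.le, max_eq_right hab.le]
    · simp only [min_eq_right h.le, max_eq_left h.le, od1, od2]
      rw [min_eq_right hab.le, max_eq_left hab.le]
  · -- f (g q) = q
    intro p hm; obtain ⟨x, y⟩ := p
    simp only [Finset.mem_coe, Finset.mem_filter, Finset.mem_product] at hm
    dsimp only
    obtain ⟨⟨hx, hy⟩, hx1, hy1, hxy, hrev⟩ := hm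
    have hix := hinvol x hx; have hiy := hinvol y hy
    have opx : min (if x % 2 = 1 then x else π x) (π (if x % 2 = 1 then x else π x)) = x := by
      by_cases hc : x % 2 = 1
      · simp [hc]; omega
      · simp [hc, hix]; omega
    have opy : min (if y % 2 = 1 then y else π y) (π (if y % 2 = 1 then y else π y)) = y := by
      by_cases hc : y % 2 = 1
      · simp [hc]; omega
      · simp [hc, hiy]; omega
    have hpx := hoe x hx; have hpy := hoe y hy
    have h2x : x % 2 < 2 := Nat.mod_lt _ (by norm_num)
    have h2px : π x % 2 < 2 := Nat.mod_lt _ (by norm_num)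
    have h2y : y % 2 < 2 := Nat.mod_lt _ (by norm_num)
    have h2py : π y % 2 < 2 := Nat.mod_lt _ (by norm_num)
    set ox := if x % 2 = 1 then x else π x with hoxd
    set oy := if y % 2 = 1 then y else π y with hoyd
    have hne : ox ≠ oy := by
      rw [hoxd, hoyd]; split <;> split <;> omega
    rcases lt_or_gt_of_ne hne with h | h
    · simp only [min_eq_left h.le, max_eq_right h.le, opx, opy]
      rw [min_eq_left hxy.le, max_eq_right hxy.le]
    · simp only [min_eq_right h.le, max_eq_left h.le, opx, opy]
      rw [min_eq_right hxy.le, max_eq_left hxy.le]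


end DD
end
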